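/- Let α > 1 be real, n ≥ 1 be real, and suppose τ > 0 satisfies Σ_{i=1}^∞ i^{-α}/(i^{-α} + τ) = n (the series converges for every τ > 0). Then ((n + 1) · α sin(π/α)/π)^{-α} ≤ τ ≤ (n · α sin(π/α)/π)^{-α}. -/

import Mathlib

open Real MeasureTheory Set Filter Topology


lemma betaReal (a : ℝ) (h0 : 0 < a) (h1 : a < 1) :
    ∫ x in (0:ℝ)..1, x ^ (a - 1) * (1 - x) ^ (-a) = π / Real.sin (π * a) := by
  have hbc : Complex.betaIntegral a (1 - a) =
      ((∫ x in (0:ℝ)..1, x ^ (a - 1) * (1 - x) ^ (-a) : ℝ) : ℂ) := by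
    rw [Complex.betaIntegral, ← intervalIntegral.integral_ofReal]
    refine intervalIntegral.integral_congr fun x hx => ?_
    rw [uIcc_of_le zero_le_one] at hx
    push_cast
    rw [Complex.ofReal_cpow hx.1, Complex.ofReal_cpow (by linarith [hx.2] : (0:ℝ) ≤ 1 - x)]
    push_cast
    ring_nf
  have hg := Complex.Gamma_mul_Gamma_eq_betaIntegral
    (s := (a:ℂ)) (t := ((1 - a : ℝ) :ℂ)) (by simpa using h0) (by simpa using h1)
  rw [show ((1-a:ℝ):ℂ) = 1 - (a:ℂ) by push_cast; ring] at hg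
  rw [show (a:ℂ) + (1 - (a:ℂ)) = 1 by ring, Complex.Gamma_one, one_mul,
    Complex.Gamma_mul_Gamma_one_sub, hbc] at hg
  have : ((π / Real.sin (π * a) : ℝ) : ℂ) = ↑π / Complex.sin (↑π * ↑a) := by
    push_cast [Complex.ofReal_sin]; norm_num
  rw [← this] at hg
  exact_mod_cast hg.symm

lemma betaIoi (a : ℝ) (h0 : 0 < a) (h1 : a < 1) :
    ∫ t in Ioi (0:ℝ), t ^ (a - 1) * (1 + t)⁻¹ = π / Real.sin (π * a) := by
  have hderiv : ∀ x ∈ Ioo (0:ℝ) 1, HasDerivWithinAt (fun x => x / (1 - x))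
      (((1 - x) ^ 2)⁻¹) (Ioo (0:ℝ) 1) x := by
    intro x hx
    have hne : (1 : ℝ) - x ≠ 0 := by nlinarith [hx.2]
    have := (hasDerivAt_id x).div ((hasDerivAt_id x).const_sub 1) hne
    rw [show ((1 - x) ^ 2)⁻¹ = (1 * (1 - id x) - id x * -1) / (1 - id x) ^ 2 by
      simp only [id_eq]; ring]
    exact this.hasDerivWithinAt
  have hinj : InjOn (fun x => x / (1 - x)) (Ioo (0:ℝ) 1) := by
    intro x hx y hy hxy
    have hx2 : (1:ℝ) - x ≠ 0 := by nlinarith [hx.2]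
    have hy2 : (1:ℝ) - y ≠ 0 := by nlinarith [hy.2]
    field_simp at hxy
    nlinarith [hxy]
  have himg : (fun x => x / (1 - x)) '' Ioo (0:ℝ) 1 = Ioi 0 := by
    ext t
    simp only [mem_image, mem_Ioi, mem_Ioo]
    constructor
    · rintro ⟨x, ⟨hx0, hx1⟩, rfl⟩
      exact div_pos hx0 (by linarith)
    · intro ht
      refine ⟨t / (1 + t), ⟨by positivity, by rw [div_lt_one (by linarith)]; linarith⟩, ?_⟩
      have h1t : (1:ℝ) + t ≠ 0 := by positivity
      field_simp
      ring
  have key := integral_image_eq_integral_abs_deriv_smul measurableSet_Ioo hderiv hinj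
    (fun t => t ^ (a - 1) * (1 + t)⁻¹)
  rw [himg] at key
  rw [key]
  have congr1 : ∫ x in Ioo (0:ℝ) 1, |((1 - x) ^ 2)⁻¹| •
      ((x / (1 - x)) ^ (a - 1) * (1 + x / (1 - x))⁻¹)
      = ∫ x in Ioo (0:ℝ) 1, x ^ (a - 1) * (1 - x) ^ (-a) := by
    refine setIntegral_congr_fun measurableSet_Ioo fun x hx => ?_
    have hx0 : 0 < x := hx.1
    have hx1 : 0 < 1 - x := by linarith [hx.2]
    have e1 : |((1 - x) ^ 2)⁻¹| = (1 - x) ^ (-2 : ℝ) := by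
      rw [abs_of_pos (by positivity), ← Real.rpow_natCast (1 - x) 2, ← Real.rpow_neg hx1.le]
      norm_num
    have e2 : (x / (1 - x)) ^ (a - 1) = x ^ (a - 1) * (1 - x) ^ (1 - a) := by
      rw [Real.div_rpow hx0.le hx1.le, div_eq_mul_inv, ← Real.rpow_neg hx1.le]
      ring_nf
    have e3 : ((1 : ℝ) + x / (1 - x))⁻¹ = (1 - x) ^ (1 : ℝ) := by
      rw [show (1 : ℝ) + x / (1 - x) = (1 - x)⁻¹ by field_simp; ring, inv_inv, Real.rpow_one]
    rw [smul_eq_mul, e1, e2, e3]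
    calc (1 - x) ^ (-2:ℝ) * (x ^ (a-1) * (1 - x) ^ (1-a) * (1 - x) ^ (1:ℝ))
        = x ^ (a-1) * ((1 - x) ^ (-2:ℝ) * (1 - x) ^ (1-a) * (1 - x) ^ (1:ℝ)) := by ring
      _ = x ^ (a-1) * (1 - x) ^ (-a) := by
          rw [← Real.rpow_add hx1, ← Real.rpow_add hx1]; norm_num
          left; ring_nf
  rw [congr1, ← integral_Ioc_eq_integral_Ioo, ← intervalIntegral.integral_of_le zero_le_one]
  exact betaReal a h0 h1

lemma intOneAdd (α : ℝ) (hα : 1 < α) :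
    ∫ x in Ioi (0:ℝ), (1 + x ^ α)⁻¹ = α⁻¹ * (π / Real.sin (π * α⁻¹)) := by
  have hα0 : (0:ℝ) < α := by linarith
  have key := integral_comp_rpow_Ioi
    (fun u => α⁻¹ * (u ^ (α⁻¹ - 1) * (1 + u)⁻¹)) (p := α) hα0.ne'
  have congr1 : ∫ x in Ioi (0:ℝ), (|α| * x ^ (α - 1)) •
      (α⁻¹ * ((x ^ α) ^ (α⁻¹ - 1) * (1 + x ^ α)⁻¹))
      = ∫ x in Ioi (0:ℝ), (1 + x ^ α)⁻¹ := by
    refine setIntegral_congr_fun measurableSet_Ioi fun x hx => ?_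
    have hx0 : (0:ℝ) < x := hx
    rw [smul_eq_mul, abs_of_pos hα0, ← Real.rpow_mul hx0.le]
    have : x ^ (α - 1) * (α⁻¹ * (x ^ (α * (α⁻¹ - 1)) * (1 + x ^ α)⁻¹))
        = (x ^ (α - 1) * x ^ (α * (α⁻¹ - 1))) * (1 + x ^ α)⁻¹ * α⁻¹ := by ring
    rw [mul_assoc, this, ← Real.rpow_add hx0]
    have h2 : α - 1 + α * (α⁻¹ - 1) = 0 := by field_simp; ring
    rw [h2, Real.rpow_zero, one_mul, mul_comm α, mul_assoc, inv_mul_cancel₀ hα0.ne', mul_one]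
  rw [congr1] at key
  rw [key, MeasureTheory.integral_const_mul,
    betaIoi α⁻¹ (by positivity) (inv_lt_one_of_one_lt₀ hα)]

lemma intFull (α τ : ℝ) (hα : 1 < α) (hτ : 0 < τ) :
    ∫ x in Ioi (0:ℝ), (1 + τ * x ^ α)⁻¹
      = τ ^ (-α⁻¹) * (α⁻¹ * (π / Real.sin (π * α⁻¹))) := by
  have hα0 : (0:ℝ) < α := by linarith
  have hb : (0:ℝ) < τ ^ α⁻¹ := Real.rpow_pos_of_pos hτ _
  have congr1 : ∫ x in Ioi (0:ℝ), (1 + τ * x ^ α)⁻¹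
      = ∫ x in Ioi (0:ℝ), (fun y => (1 + y ^ α)⁻¹) (τ ^ α⁻¹ * x) := by
    refine setIntegral_congr_fun measurableSet_Ioi fun x hx => ?_
    have hx0 : (0:ℝ) < x := hx
    dsimp only
    rw [Real.mul_rpow (Real.rpow_nonneg hτ.le _) hx0.le, ← Real.rpow_mul hτ.le,
      inv_mul_cancel₀ hα0.ne', Real.rpow_one]
  have h2 := integral_comp_mul_left_Ioi (fun y => (1 + y ^ α)⁻¹) 0 hb
  rw [mul_zero] at h2
  rw [congr1, h2, smul_eq_mul, intOneAdd α hα, ← Real.rpow_neg_one (τ ^ α⁻¹),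
    ← Real.rpow_mul hτ.le]
  norm_num

section
variable (α τ : ℝ) (hα : 1 < α) (hτ : 0 < τ)

include hα in
lemma Fmeas : Measurable (fun x : ℝ => (1 + τ * x ^ α)⁻¹) :=
  ((continuous_const.add (continuous_const.mul
    (Real.continuous_rpow_const (by linarith)))).measurable).inv

include hα hτ in
lemma Fint : IntegrableOn (fun x : ℝ => (1 + τ * x ^ α)⁻¹) (Ioi 0) := by
  have hmeas := ((Fmeas α τ hα).aestronglyMeasurable : AEStronglyMeasurable _ (volume : Measure ℝ))
  have h1 : IntegrableOn (fun x : ℝ => (1 + τ * x ^ α)⁻¹) (Ioc 0 1) := by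
    refine Measure.integrableOn_of_bounded (M := 1) (by simp) (Fmeas α τ hα).aestronglyMeasurable ?_
    refine (ae_restrict_iff' measurableSet_Ioc).2 (.of_forall fun x hx => ?_)
    have hx0 : (0:ℝ) < x := hx.1
    have h2 : (0:ℝ) < 1 + τ * x ^ α := by positivity
    rw [Real.norm_eq_abs, abs_of_pos (by positivity)]
    rw [inv_le_one_iff₀]
    right; nlinarith [Real.rpow_pos_of_pos hx0 α]
  have h2 : IntegrableOn (fun x : ℝ => (1 + τ * x ^ α)⁻¹) (Ioi 1) := by
    have hint : IntegrableOn (fun x : ℝ => τ⁻¹ * x ^ (-α)) (Ioi 1) :=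
      (integrableOn_Ioi_rpow_of_lt (by linarith) one_pos).const_mul _
    refine hint.integrable.mono' hmeas.restrict ?_
    refine (ae_restrict_iff' measurableSet_Ioi).2 (.of_forall fun x hx => ?_)
    have hx0 : (0:ℝ) < x := lt_trans one_pos hx
    have hxα : (0:ℝ) < x ^ α := Real.rpow_pos_of_pos hx0 α
    have h2 : (0:ℝ) < 1 + τ * x ^ α := by positivity
    rw [Real.norm_eq_abs, abs_of_pos (by positivity), Real.rpow_neg hx0.le]
    rw [inv_le_iff_one_le_mul₀ h2]
    have : τ⁻¹ * (x ^ α)⁻¹ * (1 + τ * x ^ α) = τ⁻¹ * (x ^ α)⁻¹ + 1 := by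
      field_simp
    rw [this]
    nlinarith [inv_pos.2 hxα, inv_pos.2 hτ]
  have := h1.union h2
  rwa [Ioc_union_Ioi_eq_Ioi zero_le_one] at this

include hα hτ in
lemma Fanti : AntitoneOn (fun x : ℝ => (1 + τ * x ^ α)⁻¹) (Ici 0) := by
  intro x hx y hy hxy
  have h1 : (0:ℝ) < 1 + τ * x ^ α := by
    have := Real.rpow_nonneg (hx : (0:ℝ) ≤ x) α; positivity
  refine inv_anti₀ h1 ?_
  have := Real.rpow_le_rpow (hx : (0:ℝ) ≤ x) hxy (by linarith : (0:ℝ) ≤ α)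
  nlinarith

end

section
variable {α τ : ℝ} (hα : 1 < α) (hτ : 0 < τ)

include hα hτ in
lemma sum_le_int :
    Summable (fun k : ℕ => (1 + τ * ((k:ℝ)+1) ^ α)⁻¹) ∧
    (∑' k : ℕ, (1 + τ * ((k:ℝ)+1) ^ α)⁻¹) ≤ ∫ x in Ioi (0:ℝ), (1 + τ * x ^ α)⁻¹ := by
  set F : ℝ → ℝ := fun x => (1 + τ * x ^ α)⁻¹ with hF
  have hnonneg : ∀ x : ℝ, 0 ≤ x → 0 ≤ F x := fun x hx => by
    have := Real.rpow_nonneg hx α; positivity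
  have key : ∀ N : ℕ, ∑ i ∈ Finset.range N, F ((i:ℝ)+1) ≤ ∫ x in Ioi (0:ℝ), F x := by
    intro N
    have h1 : AntitoneOn F (Icc (0:ℝ) (0 + N)) :=
      (Fanti α τ hα hτ).mono (Icc_subset_Ici_self)
    have h2 := h1.sum_le_integral
    have h3 : ∫ x in (0:ℝ)..(0:ℝ) + N, F x ≤ ∫ x in Ioi (0:ℝ), F x := by
      rw [zero_add, intervalIntegral.integral_of_le (by positivity)]
      refine setIntegral_mono_set (Fint α τ hα hτ) ?_ ?_
      · exact (ae_restrict_iff' measurableSet_Ioi).2 (.of_forall fun x hx =>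
          hnonneg x (le_of_lt hx))
      · exact .of_forall Ioc_subset_Ioi_self
    calc ∑ i ∈ Finset.range N, F ((i:ℝ)+1)
        = ∑ i ∈ Finset.range N, F (0 + ((i:ℕ)+1:ℕ)) := by
          refine Finset.sum_congr rfl fun i _ => ?_; push_cast; ring_nf
      _ ≤ ∫ x in (0:ℝ)..(0:ℝ) + N, F x := h2
      _ ≤ _ := h3
  have hsummable : Summable (fun k : ℕ => F ((k:ℝ)+1)) := by
    refine summable_of_sum_range_le (fun k => hnonneg _ (by positivity)) key
  exact ⟨hsummable, tsum_le_of_sum_range_le (fun k => hnonneg _ (by positivity)) key⟩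

end

section
variable {α τ : ℝ} (hα : 1 < α) (hτ : 0 < τ)

include hα hτ in
lemma int_le_sum (hsummable : Summable (fun k : ℕ => (1 + τ * ((k:ℝ)+1) ^ α)⁻¹)) :
    (∫ x in Ioi (0:ℝ), (1 + τ * x ^ α)⁻¹)
      ≤ 1 + ∑' k : ℕ, (1 + τ * ((k:ℝ)+1) ^ α)⁻¹ := by
  set F : ℝ → ℝ := fun x => (1 + τ * x ^ α)⁻¹ with hF
  have hnonneg : ∀ x : ℝ, 0 ≤ x → 0 ≤ F x := fun x hx => by
    have := Real.rpow_nonneg hx α; positivity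
  set S := ∑' k : ℕ, F ((k:ℝ)+1) with hS
  have htend : Tendsto (fun N : ℕ => ∫ x in (0:ℝ)..(N:ℝ), F x) atTop
      (𝓝 (∫ x in Ioi (0:ℝ), F x)) :=
    intervalIntegral_tendsto_integral_Ioi 0 (Fint α τ hα hτ)
      tendsto_natCast_atTop_atTop
  refine le_of_tendsto htend (eventually_atTop.2 ⟨1, fun N hN => ?_⟩)
  have h1 : AntitoneOn F (Icc (0:ℝ) (0 + N)) :=
    (Fanti α τ hα hτ).mono (Icc_subset_Ici_self)
  have h2 := h1.integral_le_sum
  rw [zero_add] at h2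
  refine le_trans h2 ?_
  obtain ⟨m, rfl⟩ := Nat.exists_eq_add_of_le hN
  rw [add_comm 1 m] at h2 ⊢
  rw [Finset.sum_range_succ']
  have hF0 : F (0 + (0:ℕ)) = 1 := by
    simp only [hF, Nat.cast_zero, add_zero, Real.zero_rpow (by positivity : α ≠ 0)]
    norm_num
  calc (∑ i ∈ Finset.range m, F (0 + ((i:ℕ)+1:ℕ))) + F (0 + (0:ℕ))
      = (∑ i ∈ Finset.range m, F ((i:ℝ)+1)) + 1 := by
        rw [hF0]; congr 1; refine Finset.sum_congr rfl fun i _ => ?_; push_cast; ring_nf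
    _ ≤ S + 1 := by
        gcongr
        exact Summable.sum_le_tsum _ (fun k _ => hnonneg _ (by positivity)) hsummable
    _ = 1 + S := by ring

end
/-- If `τ > 0` solves `∑_{i=1}^∞ i^{-α}/(i^{-α} + τ) = n` with `α > 1`
and `n ≥ 1`, then `((n+1) α sin(π/α)/π)^{-α} ≤ τ ≤ (n α sin(π/α)/π)^{-α}`. -/
theorem effective_ridge_power_law_bounds
    (α n τ : ℝ) (hα : 1 < α) (hn : 1 ≤ n) (hτ : 0 < τ)
    (hsum : ∑' i : ℕ+, (i : ℝ) ^ (-α) / ((i : ℝ) ^ (-α) + τ) = n) :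
    ((n + 1) * (α * Real.sin (Real.pi / α)) / Real.pi) ^ (-α) ≤ τ ∧
      τ ≤ (n * (α * Real.sin (Real.pi / α)) / Real.pi) ^ (-α) := by
  have hα0 : (0:ℝ) < α := by linarith
  -- rewrite the terms
  have hterm : ∀ i : ℕ+, (i : ℝ) ^ (-α) / ((i : ℝ) ^ (-α) + τ)
      = (1 + τ * (i : ℝ) ^ α)⁻¹ := by
    intro i
    have hi : (0:ℝ) < (i : ℝ) := by exact_mod_cast i.pos
    have h1 : (0:ℝ) < (i:ℝ) ^ (-α) := Real.rpow_pos_of_pos hi _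
    have h2 : (0:ℝ) < (i:ℝ) ^ α := Real.rpow_pos_of_pos hi _
    have hmul : (i:ℝ) ^ (-α) * (i:ℝ) ^ α = 1 := by
      rw [← Real.rpow_add hi]; norm_num
    rw [div_eq_iff (by positivity), inv_mul_eq_div, eq_div_iff (by positivity)]
    nlinarith [hmul]
  -- translate the tsum to ℕ
  have htsum : ∑' k : ℕ, (1 + τ * ((k:ℝ)+1) ^ α)⁻¹ = n := by
    rw [← hsum, ← Equiv.pnatEquivNat.symm.tsum_eq
      (fun i : ℕ+ => (i : ℝ) ^ (-α) / ((i : ℝ) ^ (-α) + τ))]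
    refine tsum_congr fun k => ?_
    rw [hterm]
    norm_num [Equiv.pnatEquivNat]
  set K := α⁻¹ * (π / Real.sin (π * α⁻¹)) with hKdef
  have hsin : 0 < Real.sin (π * α⁻¹) := by
    apply Real.sin_pos_of_pos_of_lt_pi
    · positivity
    · have h9 : α⁻¹ < 1 := inv_lt_one_of_one_lt₀ hα
      calc π * α⁻¹ < π * 1 := mul_lt_mul_of_pos_left h9 Real.pi_pos
        _ = π := mul_one π
  have hK : 0 < K := by positivity
  have ht : 0 < τ ^ (-α⁻¹) := Real.rpow_pos_of_pos hτ _
  have hI := intFull α τ hα hτ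
  have h_up : n ≤ τ ^ (-α⁻¹) * K := by
    rw [← htsum, ← hI]; exact (sum_le_int hα hτ).2
  have h_lo : τ ^ (-α⁻¹) * K ≤ 1 + n := by
    rw [← hI]
    calc (∫ x in Ioi (0:ℝ), (1 + τ * x ^ α)⁻¹)
        ≤ 1 + ∑' k : ℕ, (1 + τ * ((k:ℝ)+1) ^ α)⁻¹ :=
          int_le_sum hα hτ (sum_le_int hα hτ).1
      _ = 1 + n := by rw [htsum]
  have hpow : (τ ^ (-α⁻¹)) ^ (-α) = τ := by
    rw [← Real.rpow_mul hτ.le, neg_mul_neg, inv_mul_cancel₀ hα0.ne', Real.rpow_one]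
  have hπα : π / α = π * α⁻¹ := div_eq_mul_inv π α
  have hK2 : K = π / (α * Real.sin (π * α⁻¹)) := by
    rw [hKdef, inv_mul_eq_div, div_div, mul_comm]
  constructor
  · have hA : (n + 1) * (α * Real.sin (π / α)) / π = (1 + n) / K := by
      rw [hπα, hK2, div_div_eq_mul_div]
      ring
    rw [hA]
    have h1 : τ ^ (-α⁻¹) ≤ (1 + n) / K := (le_div_iff₀ hK).2 h_lo
    calc ((1 + n) / K) ^ (-α) ≤ (τ ^ (-α⁻¹)) ^ (-α) :=
          Real.rpow_le_rpow_of_nonpos ht h1 (by linarith)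
      _ = τ := hpow
  · have hB : n * (α * Real.sin (π / α)) / π = n / K := by
      rw [hπα, hK2, div_div_eq_mul_div]
    rw [hB]
    have h1 : n / K ≤ τ ^ (-α⁻¹) := (div_le_iff₀ hK).2 h_up
    have hnK : 0 < n / K := div_pos (by linarith) hK
    calc τ = (τ ^ (-α⁻¹)) ^ (-α) := hpow.symm
      _ ≤ (n / K) ^ (-α) := Real.rpow_le_rpow_of_nonpos hnK h1 (by linarith)
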